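/- The robustness of the three-qubit GHZ state relative to the fully separable states equals 2: R_FS(|GHZ⟩⟨GHZ|) = 2, where |GHZ⟩ = (|000⟩+|111⟩)/√2 in (ℂ²)^{⊗3}. -/

import Mathlib

open Matrix Finset
open scoped ComplexOrder

attribute [local instance] Classical.propDecidable

noncomputable section

/-- The rank-one matrix `|v⟩⟨v|` associated to a vector `v`. -/
def vecProj {D : Type*} [Fintype D] (v : D → ℂ) : Matrix D D ℂ :=
  Matrix.of fun i j => v i * star (v j)

/-- `v` is a unit vector. -/
def UnitVec {D : Type*} [Fintype D] (v : D → ℂ) : Prop :=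
  ∑ i, star (v i) * v i = 1

/-- A quantum state: positive semidefinite matrix of trace one. -/
def IsState {D : Type*} [Fintype D] [DecidableEq D] (ρ : Matrix D D ℂ) : Prop :=
  ρ.PosSemidef ∧ ρ.trace = 1

/-- A vector on a multipartite system is fully product if it is a tensor product of
single-party vectors. -/
def IsProdVec {ι : Type*} [Fintype ι] {Idx : ι → Type*} (v : (∀ i, Idx i) → ℂ) : Prop :=
  ∃ ψ : ∀ i, Idx i → ℂ, ∀ f, v f = ∏ i, ψ i (f i)

/-- A vector on a multipartite system is biseparable if it is a product across some
bipartition of the parties into a nonempty proper subset `M` and its complement. -/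
def IsBisepVec {ι : Type*} [Fintype ι] {Idx : ι → Type*} (v : (∀ i, Idx i) → ℂ) : Prop :=
  ∃ M : Finset ι, M.Nonempty ∧ M ≠ Finset.univ ∧
    ∃ (a : ((j : {j : ι // j ∈ M}) → Idx j.1) → ℂ)
      (b : ((j : {j : ι // j ∉ M}) → Idx j.1) → ℂ),
      ∀ f, v f = a (fun j => f j.1) * b (fun j => f j.1)

/-- Fully separable states: finite convex combinations of fully product pure states. -/
def FullySepState {ι : Type*} [Fintype ι] [DecidableEq ι] (Idx : ι → Type*)
    [∀ i, Fintype (Idx i)] (ρ : Matrix (∀ i, Idx i) (∀ i, Idx i) ℂ) : Prop :=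
  ∃ (m : ℕ) (w : Fin m → ℝ) (u : Fin m → (∀ i, Idx i) → ℂ),
    (∀ k, 0 ≤ w k) ∧ (∑ k, w k = 1) ∧
    (∀ k, UnitVec (u k) ∧ IsProdVec (u k)) ∧
    ρ = ∑ k, (w k : ℂ) • vecProj (u k)

/-- Biseparable states: finite convex combinations of biseparable pure states. -/
def BisepState {ι : Type*} [Fintype ι] [DecidableEq ι] (Idx : ι → Type*)
    [∀ i, Fintype (Idx i)] (ρ : Matrix (∀ i, Idx i) (∀ i, Idx i) ℂ) : Prop :=
  ∃ (m : ℕ) (w : Fin m → ℝ) (u : Fin m → (∀ i, Idx i) → ℂ),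
    (∀ k, 0 ≤ w k) ∧ (∑ k, w k = 1) ∧
    (∀ k, UnitVec (u k) ∧ IsBisepVec (u k)) ∧
    ρ = ∑ k, (w k : ℂ) • vecProj (u k)

/-- Robustness of `ρ` relative to the set `S`: the least `s ≥ 0` such that mixing `ρ`
with some state `σ ∈ S` with weight `s` (normalised) lands in `S`. -/
def Robustness {D : Type*} [Fintype D] [DecidableEq D]
    (S : Set (Matrix D D ℂ)) (ρ : Matrix D D ℂ) : ℝ :=
  sInf {s : ℝ | 0 ≤ s ∧ ∃ σ, IsState σ ∧ σ ∈ S ∧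
    (((1 + s)⁻¹ : ℝ) : ℂ) • (ρ + (s : ℂ) • σ) ∈ S}

/-- The three-qubit GHZ vector `(|000⟩ + |111⟩)/√2`. -/
def ghzVec : (Fin 3 → Fin 2) → ℂ := fun f =>
  if f = (fun _ => (0 : Fin 2)) ∨ f = (fun _ => (1 : Fin 2)) then
    (((Real.sqrt 2)⁻¹ : ℝ) : ℂ) else 0

/-- The three-qubit W vector `(|001⟩ + |010⟩ + |100⟩)/√3`. -/
def wVec : (Fin 3 → Fin 2) → ℂ := fun f =>
  if (∑ i, ((f i : ℕ))) = 1 then (((Real.sqrt 3)⁻¹ : ℝ) : ℂ) else 0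


abbrev D3 := Fin 3 → Fin 2

def c8 : ℂ := (((Real.sqrt 2)⁻¹ : ℝ) : ℂ)

lemma sqrt2_inv_sq : ((Real.sqrt 2)⁻¹ : ℝ) * (Real.sqrt 2)⁻¹ = 1/2 := by
  rw [← mul_inv]
  rw [Real.mul_self_sqrt (by norm_num : (0:ℝ) ≤ 2)]
  norm_num

lemma c8_sq : c8 * c8 = (1/2 : ℂ) := by
  rw [c8, ← Complex.ofReal_mul, sqrt2_inv_sq]
  norm_num

lemma c8_six : c8^3 * c8^3 = (1/8 : ℂ) := by
  have h : c8^3 * c8^3 = (c8 * c8)^3 := by ring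
  rw [h, c8_sq]; norm_num

def Uph (m n r : ℕ) : D3 → ℂ := fun f =>
  c8^3 * Complex.I ^ (m * (f 0).val + n * (f 1).val + (3*(m+n)+r) * (f 2).val)

lemma conj_c8 : (starRingEnd ℂ) c8 = c8 := Complex.conj_ofReal _

lemma Uph_unit (m n r : ℕ) : UnitVec (Uph m n r) := by
  unfold UnitVec Uph
  have key : ∀ t : ℕ, star (c8^3 * Complex.I ^ t) * (c8^3 * Complex.I ^ t) = (1/8 : ℂ) := by
    intro t
    rw [star_mul', star_pow, star_pow, Complex.star_def, Complex.conj_I, conj_c8]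
    calc c8 ^ 3 * (-Complex.I) ^ t * (c8 ^ 3 * Complex.I ^ t)
        = (c8^3 * c8^3) * ((-Complex.I) * Complex.I) ^ t := by rw [mul_pow]; ring
      _ = (1/8 : ℂ) := by rw [c8_six]; simp
  calc ∑ f : D3, star (c8^3 * Complex.I ^ _) * (c8^3 * Complex.I ^ _)
      = ∑ _f : D3, (1/8 : ℂ) := Finset.sum_congr rfl (fun f _ => key _)
    _ = 1 := by
        rw [Finset.sum_const, Finset.card_univ,
          show (Fintype.card D3) = 8 by simp [Fintype.card_fun]]
        norm_num

lemma Uph_prod (m n r : ℕ) : IsProdVec (Uph m n r) := by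
  refine ⟨fun i => fun x => c8 * Complex.I ^ ((![m, n, 3*(m+n)+r] : Fin 3 → ℕ) i * x.val), fun f => ?_⟩
  rw [Fin.prod_univ_three]
  simp only [Matrix.cons_val_zero, Matrix.cons_val_one, Matrix.head_cons, Matrix.cons_val_two, Matrix.tail_cons]
  rw [Uph]
  rw [show c8 * Complex.I ^ (m * ((f 0):ℕ)) * (c8 * Complex.I ^ (n * ((f 1):ℕ))) *
      (c8 * Complex.I ^ ((3 * (m + n) + r) * ((f 2):ℕ)))
    = c8^3 * (Complex.I ^ (m * ((f 0):ℕ)) * Complex.I ^ (n * ((f 1):ℕ)) *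
      Complex.I ^ ((3 * (m + n) + r) * ((f 2):ℕ))) by ring]
  rw [← pow_add, ← pow_add]

lemma Ipow_mod (t : ℕ) : (Complex.I)^t = Complex.I^(t % 4) := by
  conv_lhs => rw [← Nat.div_add_mod t 4]
  rw [pow_add, pow_mul, Complex.I_pow_four, one_pow, one_mul]

lemma geom (A : ℕ) : ∑ m : Fin 4, (Complex.I) ^ (m.val * A) = if A % 4 = 0 then 4 else 0 := by
  rw [Fin.sum_univ_four]
  have h0 : ((0 : Fin 4)).val = 0 := rfl
  have h1 : ((1 : Fin 4)).val = 1 := rfl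
  have h2 : ((2 : Fin 4)).val = 2 := rfl
  have h3 : ((3 : Fin 4)).val = 3 := rfl
  rw [h0, h1, h2, h3]
  rw [Ipow_mod (1*A), Ipow_mod (2*A), Ipow_mod (3*A)]
  have hr : A % 4 = 0 ∨ A % 4 = 1 ∨ A % 4 = 2 ∨ A % 4 = 3 := by omega
  rcases hr with h | h | h | h <;>
    rw [show (1*A) % 4 = 1 * (A % 4) % 4 by omega, show (2*A) % 4 = 2 * (A % 4) % 4 by omega,
        show (3*A) % 4 = 3 * (A % 4) % 4 by omega, h] <;>
    norm_num <;>
    simp [pow_succ, Complex.ext_iff]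

def Aex (f g : D3) : ℕ := ((f 0):ℕ) + 3*((g 0):ℕ) + 3*((f 2):ℕ) + 9*((g 2):ℕ)
def Bex (f g : D3) : ℕ := ((f 1):ℕ) + 3*((g 1):ℕ) + 3*((f 2):ℕ) + 9*((g 2):ℕ)

lemma Uph_entry (m n r : ℕ) (f g : D3) :
    vecProj (Uph m n r) f g = (1/8 : ℂ) * Complex.I ^ (m * Aex f g) * Complex.I ^ (n * Bex f g)
      * Complex.I ^ (r * (((f 2):ℕ) + 3 * ((g 2):ℕ))) := by
  unfold vecProj Uph Aex Bex
  simp only [Matrix.of_apply]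
  rw [star_mul', star_pow, star_pow, Complex.star_def, Complex.conj_I, conj_c8]
  rw [show (-Complex.I) = Complex.I^3 by simp [pow_succ, Complex.I_sq], ← pow_mul]
  calc c8 ^ 3 * Complex.I ^ (m * ((f 0):ℕ) + n * ((f 1):ℕ) + (3*(m+n)+r) * ((f 2):ℕ)) *
        (c8 ^ 3 * Complex.I ^ (3 * (m * ((g 0):ℕ) + n * ((g 1):ℕ) + (3*(m+n)+r) * ((g 2):ℕ))))
      = (c8^3 * c8^3) * Complex.I ^ ((m * ((f 0):ℕ) + n * ((f 1):ℕ) + (3*(m+n)+r) * ((f 2):ℕ))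
          + 3 * (m * ((g 0):ℕ) + n * ((g 1):ℕ) + (3*(m+n)+r) * ((g 2):ℕ))) := by
        rw [pow_add]; ring
    _ = (1/8 : ℂ) * Complex.I ^ (m * (((f 0):ℕ) + 3*((g 0):ℕ) + 3*((f 2):ℕ) + 9*((g 2):ℕ))
          + n * (((f 1):ℕ) + 3*((g 1):ℕ) + 3*((f 2):ℕ) + 9*((g 2):ℕ))
          + r * (((f 2):ℕ) + 3 * ((g 2):ℕ))) := by
        rw [c8_six]
        congr 1
        ring
    _ = _ := by rw [pow_add, pow_add]; ring

def sigMat : Matrix D3 D3 ℂ := Matrix.of fun f g =>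
  (1/8 : ℂ) * (if Aex f g % 4 = 0 then 1 else 0) * (if Bex f g % 4 = 0 then 1 else 0)
    * Complex.I ^ (2 * (((f 2):ℕ) + 3 * ((g 2):ℕ)))

def tauMat : Matrix D3 D3 ℂ := Matrix.of fun f g =>
  (1/8 : ℂ) * (if Aex f g % 4 = 0 then 1 else 0) * (if Bex f g % 4 = 0 then 1 else 0)

def e16 : Fin 16 ≃ Fin 4 × Fin 4 where
  toFun k := (⟨k.val / 4, by omega⟩, ⟨k.val % 4, by omega⟩)
  invFun p := ⟨4 * p.1.val + p.2.val, by omega⟩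
  left_inv k := by simp [Fin.ext_iff]; omega
  right_inv p := by
    obtain ⟨⟨a, ha⟩, ⟨b, hb⟩⟩ := p
    simp [Prod.ext_iff, Fin.ext_iff]
    omega

lemma sum16 (X : ℕ → ℕ → ℂ) :
    ∑ k : Fin 16, X (k.val / 4) (k.val % 4) = ∑ m : Fin 4, ∑ n : Fin 4, X m.val n.val := by
  have h : ∑ p : Fin 4 × Fin 4, X p.1.val p.2.val = ∑ m : Fin 4, ∑ n : Fin 4, X m.val n.val :=
    Fintype.sum_prod_type _
  rw [← h]
  exact Fintype.sum_equiv e16 _ _ (fun k => rfl)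

lemma phase_decomp (r : ℕ) :
    (∑ k : Fin 16, ((1/16 : ℝ) : ℂ) • vecProj (Uph (k.val / 4) (k.val % 4) r)) = Matrix.of fun f g =>
      (1/8 : ℂ) * (if Aex f g % 4 = 0 then 1 else 0) * (if Bex f g % 4 = 0 then 1 else 0)
        * Complex.I ^ (r * (((f 2):ℕ) + 3 * ((g 2):ℕ))) := by
  ext f g
  rw [Matrix.sum_apply]
  simp only [Matrix.smul_apply, smul_eq_mul, Matrix.of_apply]
  calc ∑ k : Fin 16, ((1/16 : ℝ) : ℂ) * vecProj (Uph (k.val / 4) (k.val % 4) r) f g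
      = ∑ m : Fin 4, ∑ n : Fin 4, ((1/16 : ℝ) : ℂ) * vecProj (Uph m.val n.val r) f g :=
        sum16 (fun m n => ((1/16 : ℝ) : ℂ) * vecProj (Uph m n r) f g)
    _ = ∑ m : Fin 4, (((1/16 : ℝ) : ℂ) * (1/8 : ℂ) * Complex.I ^ (m.val * Aex f g)
          * Complex.I ^ (r * (((f 2):ℕ) + 3 * ((g 2):ℕ)))) * ∑ n : Fin 4, Complex.I ^ (n.val * Bex f g) := by
        refine Finset.sum_congr rfl fun m _ => ?_
        rw [Finset.mul_sum]
        refine Finset.sum_congr rfl fun n _ => ?_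
        rw [Uph_entry]; ring
    _ = (∑ m : Fin 4, Complex.I ^ (m.val * Aex f g)) * (((1/16 : ℝ) : ℂ) * (1/8 : ℂ)
          * Complex.I ^ (r * (((f 2):ℕ) + 3 * ((g 2):ℕ))) * ∑ n : Fin 4, Complex.I ^ (n.val * Bex f g)) := by
        rw [Finset.sum_mul]
        refine Finset.sum_congr rfl fun m _ => ?_
        ring
    _ = _ := by
        rw [geom, geom]
        push_cast
        split_ifs <;> ring

lemma sig_decomp : sigMat = ∑ k : Fin 16, ((1/16 : ℝ) : ℂ) • vecProj (Uph (k.val / 4) (k.val % 4) 2) := by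
  rw [phase_decomp 2]; rfl

lemma tau_decomp : tauMat = ∑ k : Fin 16, ((1/16 : ℝ) : ℂ) • vecProj (Uph (k.val / 4) (k.val % 4) 0) := by
  rw [phase_decomp 0]
  unfold tauMat
  ext f g
  simp

lemma vecProj_posSemidef {D : Type*} [Fintype D] [DecidableEq D] (v : D → ℂ) :
    (vecProj v).PosSemidef := by
  rw [Matrix.posSemidef_iff_dotProduct_mulVec]
  constructor
  · ext i j
    simp [vecProj, Matrix.conjTranspose_apply, mul_comm]
  · intro x
    have hmv : (vecProj v).mulVec x = fun i => v i * (∑ j, star (v j) * x j) := by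
      funext i
      simp [Matrix.mulVec, vecProj, dotProduct, Finset.mul_sum, mul_assoc]
    rw [hmv]
    have : star x ⬝ᵥ (fun i => v i * (∑ j, star (v j) * x j))
        = star (∑ j, star (v j) * x j) * (∑ j, star (v j) * x j) := by
      simp only [dotProduct, Pi.star_apply, star_sum, StarMul.star_mul, star_star]
      rw [Finset.sum_mul]
      refine Finset.sum_congr rfl fun i _ => ?_
      ring
    rw [this]
    exact star_mul_self_nonneg _

lemma smul_posSemidef {D : Type*} [Fintype D] [DecidableEq D] {M : Matrix D D ℂ}
    (hM : M.PosSemidef) {w : ℝ} (hw : 0 ≤ w) : ((w : ℂ) • M).PosSemidef := by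
  rw [Matrix.posSemidef_iff_dotProduct_mulVec]
  constructor
  · ext i j
    simp only [Matrix.conjTranspose_apply, Matrix.smul_apply, star_smul, smul_eq_mul]
    rw [star_mul']
    have := hM.1
    rw [Matrix.IsHermitian] at this
    have h2 : star (M j i) = M i j := by
      conv_rhs => rw [← this]
      simp [Matrix.conjTranspose_apply]
    rw [h2]
    simp [Complex.star_def, Complex.conj_ofReal]
  · intro x
    rw [Matrix.smul_mulVec, dotProduct_smul]
    rw [smul_eq_mul]
    exact mul_nonneg (by exact_mod_cast Complex.zero_le_real.mpr hw) (hM.dotProduct_mulVec_nonneg x)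

lemma vecProj_trace (v : D3 → ℂ) (hv : UnitVec v) : (vecProj v).trace = 1 := by
  rw [Matrix.trace]
  rw [← hv]
  refine Finset.sum_congr rfl fun i _ => ?_
  simp [Matrix.diag, vecProj, mul_comm]

lemma fs_isState {ρ : Matrix D3 D3 ℂ} (h : FullySepState (fun _ : Fin 3 => Fin 2) ρ) :
    IsState ρ := by
  obtain ⟨m, w, u, hw, hs, hu, rfl⟩ := h
  constructor
  · refine Finset.sum_induction _ _ (fun a b ha hb => ha.add hb) Matrix.PosSemidef.zero
      (fun k _ => smul_posSemidef (vecProj_posSemidef _) (hw k))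
  · rw [Matrix.trace_sum]
    have : ∀ k : Fin m, ((w k : ℂ) • vecProj (u k)).trace = (w k : ℂ) := by
      intro k
      rw [Matrix.trace_smul, vecProj_trace _ (hu k).1, smul_eq_mul, mul_one]
    rw [Finset.sum_congr rfl (fun k _ => this k)]
    rw [← Complex.ofReal_sum]
    rw [hs]
    norm_num

lemma sum_const_sixteenth : ∑ _k : Fin 16, (1/16 : ℝ) = 1 := by
  rw [Finset.sum_const, Finset.card_univ, Fintype.card_fin]
  norm_num

lemma fs_sig : FullySepState (fun _ : Fin 3 => Fin 2) sigMat :=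
  ⟨16, fun _ => 1/16, fun k => Uph (k.val / 4) (k.val % 4) 2,
    fun _ => by norm_num, sum_const_sixteenth,
    fun k => ⟨Uph_unit _ _ _, Uph_prod _ _ _⟩, sig_decomp⟩

lemma fs_tau : FullySepState (fun _ : Fin 3 => Fin 2) tauMat :=
  ⟨16, fun _ => 1/16, fun k => Uph (k.val / 4) (k.val % 4) 0,
    fun _ => by norm_num, sum_const_sixteenth,
    fun k => ⟨Uph_unit _ _ _, Uph_prod _ _ _⟩, tau_decomp⟩

lemma fs_pure (u : D3 → ℂ) (hu : UnitVec u) (hp : IsProdVec u) :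
    FullySepState (fun _ : Fin 3 => Fin 2) (vecProj u) := by
  refine ⟨1, fun _ => 1, fun _ => u, fun _ => by norm_num, by simp, fun _ => ⟨hu, hp⟩, ?_⟩
  simp

lemma fs_mix (a b : ℝ) (ha : 0 ≤ a) (hb : 0 ≤ b) (hab : a + b = 1)
    {ρ₁ ρ₂ : Matrix D3 D3 ℂ}
    (h1 : FullySepState (fun _ : Fin 3 => Fin 2) ρ₁)
    (h2 : FullySepState (fun _ : Fin 3 => Fin 2) ρ₂) :
    FullySepState (fun _ : Fin 3 => Fin 2) ((a : ℂ) • ρ₁ + (b : ℂ) • ρ₂) := by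
  obtain ⟨m₁, w₁, u₁, hw₁, hs₁, hu₁, hρ₁⟩ := h1
  obtain ⟨m₂, w₂, u₂, hw₂, hs₂, hu₂, hρ₂⟩ := h2
  refine ⟨m₁ + m₂, Fin.addCases (fun i => a * w₁ i) (fun j => b * w₂ j),
    Fin.addCases u₁ u₂, ?_, ?_, ?_, ?_⟩
  · intro k
    refine Fin.addCases (fun i => ?_) (fun j => ?_) k
    · simp only [Fin.addCases_left]; exact mul_nonneg ha (hw₁ i)
    · simp only [Fin.addCases_right]; exact mul_nonneg hb (hw₂ j)
  · rw [Fin.sum_univ_add]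
    simp only [Fin.addCases_left, Fin.addCases_right]
    rw [← Finset.mul_sum, ← Finset.mul_sum, hs₁, hs₂, mul_one, mul_one, hab]
  · intro k
    refine Fin.addCases (fun i => ?_) (fun j => ?_) k
    · simp only [Fin.addCases_left]; exact hu₁ i
    · simp only [Fin.addCases_right]; exact hu₂ j
  · rw [Fin.sum_univ_add]
    simp only [Fin.addCases_left, Fin.addCases_right]
    rw [hρ₁, hρ₂, Finset.smul_sum, Finset.smul_sum]
    congr 1
    · refine Finset.sum_congr rfl fun i _ => ?_
      rw [smul_smul, Complex.ofReal_mul]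
    · refine Finset.sum_congr rfl fun j _ => ?_
      rw [smul_smul, Complex.ofReal_mul]

def delta (x : D3) : D3 → ℂ := fun f => if f = x then 1 else 0

lemma delta_unit (x : D3) : UnitVec (delta x) := by
  unfold UnitVec delta
  rw [Finset.sum_eq_single x] <;> simp +contextual

lemma delta_prod (x : D3) : IsProdVec (delta x) := by
  refine ⟨fun i => fun y => if y = x i then 1 else 0, fun f => ?_⟩
  by_cases h : f = x
  · subst h
    simp [delta]
  · rw [delta, if_neg h]
    have : ∃ i, f i ≠ x i := Function.ne_iff.mp h
    obtain ⟨i, hi⟩ := this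
    exact (Finset.prod_eq_zero (Finset.mem_univ i) (by simp [hi])).symm

def e0v : D3 := fun _ => 0
def e1v : D3 := fun _ => 1

lemma matlit_eq (a b c d e x : Fin 2) :
    ((![a,b,c] : D3) = ![d,e,x]) ↔ (a = d ∧ b = e ∧ c = x) := by
  constructor
  · intro h
    exact ⟨congrFun h 0, congrFun h 1, congrFun h 2⟩
  · rintro ⟨rfl, rfl, rfl⟩
    rfl

lemma e0v_lit : e0v = ![0,0,0] := by funext i; fin_cases i <;> rfl
lemma e1v_lit : e1v = ![1,1,1] := by funext i; fin_cases i <;> rfl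
lemma fun0_lit : (fun _ => (0 : Fin 2)) = ![0,0,0] := e0v_lit
lemma fun1_lit : (fun _ => (1 : Fin 2)) = ![1,1,1] := e1v_lit
lemma fin2_ne : ¬((0 : Fin 2) = 1) ∧ ¬((1 : Fin 2) = 0) := by
  constructor <;> intro h <;> exact absurd (Fin.val_eq_of_eq h) (by norm_num)

lemma ghz_entries_aux : Complex.I^6 = -1 ∧ Complex.I^8 = 1 ∧
    (((Real.sqrt 2)⁻¹ : ℝ) : ℂ) * star (((Real.sqrt 2)⁻¹ : ℝ) : ℂ) = 1/2 := by
  refine ⟨?_, ?_, ?_⟩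
  · rw [(by norm_num : 6 = 2*3), pow_mul, Complex.I_sq]; norm_num
  · rw [(by norm_num : 8 = 4*2), pow_mul, Complex.I_pow_four]; norm_num
  · rw [Complex.star_def, Complex.conj_ofReal, ← Complex.ofReal_mul, sqrt2_inv_sq]; norm_num

set_option maxHeartbeats 4000000 in
lemma key_identity :
    (((1 + 2 : ℝ)⁻¹ : ℝ) : ℂ) • (vecProj ghzVec + ((2:ℝ) : ℂ) • sigMat)
      = ((2/3 : ℝ) : ℂ) • tauMat
        + ((1/3 : ℝ) : ℂ) • (((1/2:ℝ):ℂ) • vecProj (delta e0v) + ((1/2:ℝ):ℂ) • vecProj (delta e1v)) := by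
  obtain ⟨h6, h8, hamp⟩ := ghz_entries_aux
  have hs2 : Real.sqrt 2 * Real.sqrt 2 = 2 := Real.mul_self_sqrt (by norm_num)
  have hs2' : Real.sqrt 2/2 * (Real.sqrt 2/2) = 1/2 := by nlinarith [hs2]
  ext f g
  obtain ⟨a, b, c, rfl⟩ : ∃ a b c, f = ![a, b, c] := ⟨f 0, f 1, f 2, by funext i; fin_cases i <;> rfl⟩
  obtain ⟨d, e, x, rfl⟩ : ∃ d e x, g = ![d, e, x] := ⟨g 0, g 1, g 2, by funext i; fin_cases i <;> rfl⟩
  fin_cases a <;> fin_cases b <;> fin_cases c <;> fin_cases d <;> fin_cases e <;> fin_cases x <;>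
  · simp only [Matrix.add_apply, Matrix.smul_apply,
      Matrix.of_apply, smul_eq_mul, vecProj,
      ghzVec, sigMat, tauMat, Aex, Bex, delta, e0v_lit, e1v_lit, fun0_lit, fun1_lit,
      matlit_eq, fin2_ne.1, fin2_ne.2, Matrix.cons_val_zero, Matrix.cons_val_one,
      Matrix.head_cons, Matrix.cons_val_two, Matrix.tail_cons]
    norm_num [h6, h8, hamp, Complex.ext_iff, hs2, hs2']

def fW (ρ : Matrix D3 D3 ℂ) : ℝ :=
  (1/6) * ((∑ x : D3, (ρ x x).re) - (ρ e0v e0v).re - (ρ e1v e1v).re) - (ρ e0v e1v).re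

lemma fW_smul (r : ℝ) (ρ : Matrix D3 D3 ℂ) : fW ((r:ℂ) • ρ) = r * fW ρ := by
  unfold fW
  simp only [Matrix.smul_apply, smul_eq_mul, Complex.re_ofReal_mul]
  rw [← Finset.mul_sum]
  ring

lemma fW_add (ρ σ : Matrix D3 D3 ℂ) : fW (ρ + σ) = fW ρ + fW σ := by
  unfold fW
  simp only [Matrix.add_apply, Complex.add_re, Finset.sum_add_distrib]
  ring

lemma fW_sum {m : ℕ} (w : Fin m → ℝ) (P : Fin m → Matrix D3 D3 ℂ) :
    fW (∑ k, (w k : ℂ) • P k) = ∑ k, w k * fW (P k) := by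
  induction (Finset.univ : Finset (Fin m)) using Finset.cons_induction with
  | empty => simp [fW]
  | cons a s ha ih => rw [Finset.sum_cons, Finset.sum_cons, fW_add, fW_smul, ih]

def e3 : Fin 2 × Fin 2 × Fin 2 ≃ D3 where
  toFun p := ![p.1, p.2.1, p.2.2]
  invFun f := (f 0, f 1, f 2)
  left_inv := by decide
  right_inv := by decide

lemma sumD3 {M : Type*} [AddCommMonoid M] (F : D3 → M) :
    ∑ f : D3, F f = F ![0,0,0] + F ![0,0,1] + F ![0,1,0] + F ![0,1,1]
      + F ![1,0,0] + F ![1,0,1] + F ![1,1,0] + F ![1,1,1] := by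
  rw [← Fintype.sum_equiv e3 (fun p => F (e3 p)) F (fun p => rfl)]
  rw [Fintype.sum_prod_type, Fin.sum_univ_two]
  simp [Fintype.sum_prod_type, Fin.sum_univ_two, e3]
  abel


lemma fW_ghz : fW (vecProj ghzVec) = -(1/2) := by
  obtain ⟨h6, h8, hamp⟩ := ghz_entries_aux
  have hs2 : Real.sqrt 2 * Real.sqrt 2 = 2 := Real.mul_self_sqrt (by norm_num)
  have hs2' : Real.sqrt 2/2 * (Real.sqrt 2/2) = 1/2 := by nlinarith [hs2]
  unfold fW
  rw [sumD3 (fun x => ((vecProj ghzVec) x x).re)]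
  simp only [e0v_lit, e1v_lit, vecProj, Matrix.of_apply, ghzVec, fun0_lit, fun1_lit,
    matlit_eq, fin2_ne.1, fin2_ne.2]
  norm_num [hamp, Complex.ext_iff, hs2, hs2']

lemma diag_entry (u : D3 → ℂ) (ψ : (i : Fin 3) → Fin 2 → ℂ)
    (hψ : ∀ f : D3, u f = ∏ i, ψ i (f i)) (f : D3) :
    ((vecProj u) f f).re
      = (norm (ψ 0 (f 0)))^2 * (norm (ψ 1 (f 1)))^2 * (norm (ψ 2 (f 2)))^2 := by
  simp only [vecProj, Matrix.of_apply]
  rw [Complex.star_def, Complex.mul_conj, Complex.ofReal_re]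
  rw [hψ f, Fin.prod_univ_three, Complex.normSq_mul, Complex.normSq_mul,
    ← Complex.sq_norm, ← Complex.sq_norm, ← Complex.sq_norm]

lemma real_lb (a0 b0 a1 b1 a2 b2 R : ℝ)
    (hR : R ≤ a0*a1*a2*(b0*b1*b2)) :
    0 ≤ 1/6*((a0^2*a1^2*a2^2 + a0^2*a1^2*b2^2 + a0^2*b1^2*a2^2 + a0^2*b1^2*b2^2
        + b0^2*a1^2*a2^2 + b0^2*a1^2*b2^2 + b0^2*b1^2*a2^2 + b0^2*b1^2*b2^2)
      - a0^2*a1^2*a2^2 - b0^2*b1^2*b2^2) - R := by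
  nlinarith [hR, sq_nonneg (a0*a1*b2 - b0*b1*a2), sq_nonneg (a0*b1*a2 - b0*a1*b2),
    sq_nonneg (a0*b1*b2 - b0*a1*a2)]

lemma real_ub (a0 b0 a1 b1 a2 b2 R : ℝ)
    (n0 : 0 ≤ a0) (n1 : 0 ≤ b0) (n2 : 0 ≤ a1) (n3 : 0 ≤ b1) (n4 : 0 ≤ a2) (n5 : 0 ≤ b2)
    (htot : a0^2*a1^2*a2^2 + a0^2*a1^2*b2^2 + a0^2*b1^2*a2^2 + a0^2*b1^2*b2^2
        + b0^2*a1^2*a2^2 + b0^2*a1^2*b2^2 + b0^2*b1^2*a2^2 + b0^2*b1^2*b2^2 = 1)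
    (hR : -(a0*a1*a2*(b0*b1*b2)) ≤ R) :
    1/6*((a0^2*a1^2*a2^2 + a0^2*a1^2*b2^2 + a0^2*b1^2*a2^2 + a0^2*b1^2*b2^2
        + b0^2*a1^2*a2^2 + b0^2*a1^2*b2^2 + b0^2*b1^2*a2^2 + b0^2*b1^2*b2^2)
      - a0^2*a1^2*a2^2 - b0^2*b1^2*b2^2) - R ≤ 1/4 := by
  have hm8 : a0*b0*(a1*b1)*(a2*b2) ≤ 1/8 := by
    have i0 : 2*(a0*b0) ≤ a0^2+b0^2 := by nlinarith [sq_nonneg (a0-b0)]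
    have i1 : 2*(a1*b1) ≤ a1^2+b1^2 := by nlinarith [sq_nonneg (a1-b1)]
    have i2 : 2*(a2*b2) ≤ a2^2+b2^2 := by nlinarith [sq_nonneg (a2-b2)]
    have hprod : (a0^2+b0^2)*((a1^2+b1^2)*(a2^2+b2^2)) = 1 := by linear_combination htot
    have inner : (2*(a1*b1))*(2*(a2*b2)) ≤ (a1^2+b1^2)*(a2^2+b2^2) :=
      mul_le_mul i1 i2 (by positivity) (by positivity)
    have c1 : (2*(a0*b0))*((2*(a1*b1))*(2*(a2*b2))) ≤ (a0^2+b0^2)*((a1^2+b1^2)*(a2^2+b2^2)) :=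
      mul_le_mul i0 inner (by positivity) (by positivity)
    nlinarith [c1, hprod]
  nlinarith [hR, hm8, sq_nonneg (a0*a1*a2 - b0*b1*b2)]

set_option maxHeartbeats 1000000 in
lemma fW_prod_bounds (u : D3 → ℂ) (hu : UnitVec u) (hp : IsProdVec u) :
    0 ≤ fW (vecProj u) ∧ fW (vecProj u) ≤ 1/4 := by
  obtain ⟨ψ, hψ⟩ := hp
  have n0 : 0 ≤ norm (ψ 0 0) := norm_nonneg _
  have n1 : 0 ≤ norm (ψ 0 1) := norm_nonneg _
  have n2 : 0 ≤ norm (ψ 1 0) := norm_nonneg _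
  have n3 : 0 ≤ norm (ψ 1 1) := norm_nonneg _
  have n4 : 0 ≤ norm (ψ 2 0) := norm_nonneg _
  have n5 : 0 ≤ norm (ψ 2 1) := norm_nonneg _
  have htot : ∑ f : D3, ((vecProj u) f f).re = 1 := by
    have h1 : (∑ f : D3, star (u f) * u f) = 1 := hu
    have h2 : ∑ f : D3, ((vecProj u) f f).re = (∑ f : D3, star (u f) * u f).re := by
      rw [Complex.re_sum]
      refine Finset.sum_congr rfl fun f _ => ?_
      simp only [vecProj, Matrix.of_apply]
      rw [mul_comm]
    rw [h2, h1]
    rfl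
  rw [sumD3 (fun x => ((vecProj u) x x).re)] at htot
  simp only [diag_entry u ψ hψ, Matrix.cons_val_zero, Matrix.cons_val_one, Matrix.head_cons,
    Matrix.cons_val_two, Matrix.tail_cons] at htot
  have hod : |((vecProj u) e0v e1v).re| ≤ (norm (ψ 0 0))*(norm (ψ 1 0))*(norm (ψ 2 0))*((norm (ψ 0 1))*(norm (ψ 1 1))*(norm (ψ 2 1))) := by
    have h1 : ((vecProj u) e0v e1v) = u e0v * star (u e1v) := rfl
    calc |((vecProj u) e0v e1v).re| ≤ norm ((vecProj u) e0v e1v) :=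
          Complex.abs_re_le_norm _
      _ = norm (u e0v) * norm (u e1v) := by
          rw [h1, norm_mul, Complex.star_def, Complex.norm_conj]
      _ = _ := by
          rw [hψ e0v, hψ e1v, Fin.prod_univ_three, Fin.prod_univ_three,
            norm_mul, norm_mul, norm_mul, norm_mul]
          rfl
  have hdod := abs_le.mp hod
  simp only [e0v_lit, e1v_lit] at hdod
  unfold fW
  rw [sumD3 (fun x => ((vecProj u) x x).re)]
  simp only [e0v_lit, e1v_lit, diag_entry u ψ hψ, Matrix.cons_val_zero, Matrix.cons_val_one,
    Matrix.head_cons, Matrix.cons_val_two, Matrix.tail_cons]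
  set a0 := norm (ψ 0 0) with ha0
  set b0 := norm (ψ 0 1) with hb0
  set a1 := norm (ψ 1 0) with ha1
  set b1 := norm (ψ 1 1) with hb1
  set a2 := norm (ψ 2 0) with ha2
  set b2 := norm (ψ 2 1) with hb2
  refine ⟨?_, ?_⟩
  · linarith [real_lb a0 b0 a1 b1 a2 b2 ((vecProj u ![0,0,0] ![1,1,1]).re) hdod.2]
  · linarith [real_ub a0 b0 a1 b1 a2 b2 ((vecProj u ![0,0,0] ![1,1,1]).re) n0 n1 n2 n3 n4 n5
      (by linarith [htot]) hdod.1]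

lemma fW_fs {ρ : Matrix D3 D3 ℂ} (h : FullySepState (fun _ : Fin 3 => Fin 2) ρ) :
    0 ≤ fW ρ ∧ fW ρ ≤ 1/4 := by
  obtain ⟨m, w, u, hw, hs, hu, rfl⟩ := h
  rw [fW_sum]
  constructor
  · exact Finset.sum_nonneg fun k _ => mul_nonneg (hw k) (fW_prod_bounds _ (hu k).1 (hu k).2).1
  · calc ∑ k, w k * fW (vecProj (u k)) ≤ ∑ k, w k * (1/4) :=
        Finset.sum_le_sum fun k _ =>
          mul_le_mul_of_nonneg_left (fW_prod_bounds _ (hu k).1 (hu k).2).2 (hw k)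
      _ = 1/4 := by rw [← Finset.sum_mul, hs, one_mul]


/-- The robustness of the three-qubit GHZ state relative to the fully separable
states equals 2. -/
theorem robustness_GHZ :
    Robustness {ρ | FullySepState (fun _ : Fin 3 => Fin 2) ρ} (vecProj ghzVec) = 2 := by
  unfold Robustness
  have hmem : (2:ℝ) ∈ {s : ℝ | 0 ≤ s ∧ ∃ σ, IsState σ ∧
      σ ∈ {ρ | FullySepState (fun _ : Fin 3 => Fin 2) ρ} ∧
      (((1 + s)⁻¹ : ℝ) : ℂ) • (vecProj ghzVec + (s : ℂ) • σ)
        ∈ {ρ | FullySepState (fun _ : Fin 3 => Fin 2) ρ}} := by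
    refine ⟨by norm_num, sigMat, fs_isState fs_sig, fs_sig, ?_⟩
    simp only [Set.mem_setOf_eq]
    rw [key_identity]
    exact fs_mix (2/3) (1/3) (by norm_num) (by norm_num) (by norm_num) fs_tau
      (fs_mix (1/2) (1/2) (by norm_num) (by norm_num) (by norm_num)
        (fs_pure _ (delta_unit e0v) (delta_prod e0v))
        (fs_pure _ (delta_unit e1v) (delta_prod e1v)))
  apply le_antisymm
  · exact csInf_le ⟨0, fun x hx => hx.1⟩ hmem
  · refine le_csInf ⟨2, hmem⟩ ?_
    rintro s ⟨hs0, σ, hσst, hσfs, hmixfs⟩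
    have h1 := fW_fs hσfs
    have h2 := fW_fs hmixfs
    have heq : fW ((((1 + s)⁻¹ : ℝ) : ℂ) • (vecProj ghzVec + (s : ℂ) • σ))
        = (1+s)⁻¹ * (fW (vecProj ghzVec) + s * fW σ) := by
      rw [fW_smul, fW_add, fW_smul]
    rw [heq, fW_ghz] at h2
    have hpos : 0 < (1+s)⁻¹ := inv_pos.mpr (by linarith)
    have hX : 0 ≤ -(1/2) + s * fW σ := by
      by_contra hc
      push_neg at hc
      nlinarith [h2.1, hpos]
    nlinarith [h1.2, hs0, hX]
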